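/- Assume q ≥ 2 and fix c in the interior of C with c_q = 1. Then the affine map λ ↦ w(λ) restricts to a bijection from Λ onto W whose inverse is w ↦ (w₁, …, w_{q−1}); moreover, it maps the (topological) interior of Λ in ℝ^{q−1} onto the relative interior of W, i.e., λ ∈ int Λ implies w(λ) ∈ ri W, and w ∈ ri W implies (w₁, …, w_{q−1}) ∈ int Λ. -/

import Mathlib

open Matrix

private lemma dot_continuous {n : ℕ} (y : Fin n → ℝ) :
    Continuous fun z : Fin n → ℝ => z ⬝ᵥ y := by
  show Continuous fun z : Fin n → ℝ => ∑ j, z j * y j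
  exact continuous_finset_sum _ fun j _ => (continuous_apply j).mul continuous_const

private lemma dot_sum {n k : ℕ} (z : Fin n → ℝ) (μ : Fin k → ℝ) (Y : Fin k → Fin n → ℝ) :
    z ⬝ᵥ (∑ i, μ i • Y i) = ∑ i, μ i * (z ⬝ᵥ Y i) := by
  show ∑ j, z j * (∑ i, μ i • Y i) j = _
  simp only [Finset.sum_apply, Pi.smul_apply, smul_eq_mul, Finset.mul_sum]
  rw [Finset.sum_comm]
  show _ = ∑ i, μ i * ∑ j, z j * Y i j
  simp only [Finset.mul_sum]
  exact Finset.sum_congr rfl fun i _ => Finset.sum_congr rfl fun j _ => by ring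

private lemma intrinsic_eq {V : Type*} [NormedAddCommGroup V] [NormedSpace ℝ V]
    (S : AffineSubspace ℝ V) (W : Set V) (h : S = affineSpan ℝ W) :
    intrinsicInterior ℝ W = Subtype.val '' interior ((Subtype.val : S → V) ⁻¹' W) := by
  subst h; rfl

private noncomputable def hplane {n : ℕ} (c : Fin n → ℝ) : AffineSubspace ℝ (Fin n → ℝ) where
  carrier := {w | w ⬝ᵥ c = 1}
  smul_vsub_vadd_mem' := by
    intro t p₁ p₂ p₃ h₁ h₂ h₃
    simp only [Set.mem_setOf_eq] at *
    rw [vadd_eq_add, vsub_eq_sub, add_dotProduct, smul_dotProduct, sub_dotProduct, h₁, h₂, h₃]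
    simp

private lemma snoc_dot {n : ℕ} (lam : Fin n → ℝ) (t : ℝ) (c : Fin (n + 1) → ℝ) :
    (Fin.snoc lam t : Fin (n + 1) → ℝ) ⬝ᵥ c
      = (∑ i, lam i * c (Fin.castSucc i)) + t * c (Fin.last n) := by
  simp only [dotProduct, Fin.sum_univ_castSucc, Fin.snoc_castSucc, Fin.snoc_last]

private lemma mem_hplane {n : ℕ} {c x : Fin n → ℝ} : x ∈ hplane c ↔ x ⬝ᵥ c = 1 := Iff.rfl

theorem parameter_set_bijection
    (q' : ℕ) (hq' : 1 ≤ q')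
    (C : Set (Fin (q' + 1) → ℝ))
    (hC0 : {(0 : Fin (q' + 1) → ℝ)} ⊂ C) (hCuniv : C ≠ Set.univ)
    (hCpoly : ∃ (k : ℕ) (Y : Fin k → Fin (q' + 1) → ℝ),
      C = {v | ∃ μ : Fin k → ℝ, (∀ i, 0 ≤ μ i) ∧ v = ∑ i, μ i • Y i})
    (hCpointed : ∀ v ∈ C, -v ∈ C → v = 0)
    (hCsolid : (interior C).Nonempty)
    (c : Fin (q' + 1) → ℝ) (hc : c ∈ interior C) (hclast : c (Fin.last q') = 1)
    (Cplus : Set (Fin (q' + 1) → ℝ))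
    (hCplus : Cplus = {z | ∀ v ∈ C, 0 ≤ z ⬝ᵥ v})
    (W : Set (Fin (q' + 1) → ℝ)) (hW : W = {w ∈ Cplus | w ⬝ᵥ c = 1})
    (wmap : (Fin q' → ℝ) → Fin (q' + 1) → ℝ)
    (hwmap : wmap = fun lam => (Fin.snoc lam (1 - ∑ i, c (Fin.castSucc i) * lam i) : Fin (q' + 1) → ℝ))
    (Lam : Set (Fin q' → ℝ)) (hLam : Lam = {lam | wmap lam ∈ Cplus}) :
    (∀ lam ∈ Lam, wmap lam ∈ W) ∧
    (∀ w ∈ W, Fin.init w ∈ Lam) ∧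
    (∀ lam ∈ Lam, Fin.init (wmap lam) = lam) ∧
    (∀ w ∈ W, wmap (Fin.init w) = w) ∧
    (∀ lam ∈ interior Lam, wmap lam ∈ intrinsicInterior ℝ W) ∧
    (∀ w ∈ intrinsicInterior ℝ W, Fin.init w ∈ interior Lam) := by
  -- basic algebraic facts about wmap
  have hdot1 : ∀ lam, wmap lam ⬝ᵥ c = 1 := by
    intro lam
    simp only [hwmap]
    rw [snoc_dot, hclast, mul_one]
    have : ∑ i, lam i * c (Fin.castSucc i) = ∑ i, c (Fin.castSucc i) * lam i :=
      Finset.sum_congr rfl fun i _ => mul_comm _ _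
    rw [this]; ring
  have hinit : ∀ lam, Fin.init (wmap lam) = lam := by
    intro lam; rw [hwmap]; exact Fin.init_snoc _ _
  have hsurj : ∀ x : Fin (q' + 1) → ℝ, x ⬝ᵥ c = 1 → wmap (Fin.init x) = x := by
    intro x hx
    have hx' : (∑ i, Fin.init x i * c (Fin.castSucc i)) + x (Fin.last q') * c (Fin.last q') = 1 := by
      rw [← snoc_dot, Fin.snoc_init_self]; exact hx
    rw [hclast, mul_one] at hx'
    have hlast : 1 - ∑ i, c (Fin.castSucc i) * Fin.init x i = x (Fin.last q') := by
      have h2 : ∑ i, c (Fin.castSucc i) * Fin.init x i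
          = ∑ i, Fin.init x i * c (Fin.castSucc i) :=
        Finset.sum_congr rfl fun i _ => mul_comm _ _
      rw [h2]; linarith
    simp only [hwmap]
    show Fin.snoc (Fin.init x) (1 - ∑ i, c (Fin.castSucc i) * Fin.init x i) = x
    rw [hlast]
    exact Fin.snoc_init_self x
  have g1 : ∀ lam ∈ Lam, wmap lam ∈ W := by
    intro lam h
    rw [hW]; rw [hLam] at h
    exact ⟨h, hdot1 lam⟩
  have g4 : ∀ w ∈ W, wmap (Fin.init w) = w := by
    intro w hw; rw [hW] at hw; exact hsurj w hw.2
  have g2 : ∀ w ∈ W, Fin.init w ∈ Lam := by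
    intro w hw
    rw [hLam]
    show wmap (Fin.init w) ∈ Cplus
    rw [g4 w hw]
    rw [hW] at hw; exact hw.1
  -- continuity of wmap
  have hcontw : Continuous wmap := by
    rw [hwmap]
    apply continuous_pi
    intro i
    induction i using Fin.lastCases with
    | last =>
        simp only [Fin.snoc_last]
        exact continuous_const.sub
          (continuous_finset_sum _ fun j _ => (continuous_const.mul (continuous_apply j)))
    | cast j =>
        simp only [Fin.snoc_castSucc]
        exact continuous_apply j
  -- affine structure of wmap
  have haff : ∀ (s : ℝ) (a b : Fin q' → ℝ),
      s • (wmap a - wmap b) + wmap b = wmap (s • (a - b) + b) := by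
    intro s a b
    funext i
    simp only [hwmap]
    induction i using Fin.lastCases with
    | last =>
        simp only [Pi.add_apply, Pi.smul_apply, Pi.sub_apply, Fin.snoc_last, smul_eq_mul]
        have h1 : ∑ i, c (Fin.castSucc i) * (s * (a i - b i) + b i)
            = s * (∑ i, c (Fin.castSucc i) * a i) - s * (∑ i, c (Fin.castSucc i) * b i)
              + ∑ i, c (Fin.castSucc i) * b i := by
          rw [Finset.sum_congr rfl (fun i _ =>
            show c (Fin.castSucc i) * (s * (a i - b i) + b i)
              = s * (c (Fin.castSucc i) * a i) - s * (c (Fin.castSucc i) * b i)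
                + c (Fin.castSucc i) * b i from by ring)]
          rw [Finset.sum_add_distrib, Finset.sum_sub_distrib, ← Finset.mul_sum, ← Finset.mul_sum]
        rw [h1]; ring
    | cast j =>
        simp only [Pi.add_apply, Pi.smul_apply, Pi.sub_apply, Fin.snoc_castSucc, smul_eq_mul]
  -- the nonempty-interior argument
  obtain ⟨k, Y, hYrep⟩ := hCpoly
  have hYmem : ∀ i, Y i ∈ C := by
    intro i; rw [hYrep]
    refine ⟨fun j => if j = i then 1 else 0, fun j => by dsimp; split <;> norm_num, ?_⟩
    simp [ite_smul]
  have hCadd : ∀ a ∈ C, ∀ b ∈ C, a + b ∈ C := by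
    intro a ha b hb
    rw [hYrep] at *
    obtain ⟨μ, hμ, rfl⟩ := ha; obtain ⟨ν, hν, rfl⟩ := hb
    exact ⟨μ + ν, fun i => add_nonneg (hμ i) (hν i), by
      simp [add_smul, Finset.sum_add_distrib]⟩
  have hCsmul : ∀ (t : ℝ), 0 ≤ t → ∀ a ∈ C, t • a ∈ C := by
    intro t ht a ha
    rw [hYrep] at *
    obtain ⟨μ, hμ, rfl⟩ := ha
    exact ⟨t • μ, fun i => mul_nonneg ht (hμ i), by
      simp [Finset.smul_sum, smul_smul]⟩
  have hC0mem : (0 : Fin (q' + 1) → ℝ) ∈ C := hC0.1 rfl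
  classical
  set T' : Finset (Fin (q' + 1) → ℝ) :=
    (Finset.univ.filter fun i => Y i ≠ 0).image Y with hT'def
  have hT' : ∀ y ∈ T', y ∈ C ∧ y ≠ 0 := by
    intro y hy
    simp only [hT'def, Finset.mem_image, Finset.mem_filter, Finset.mem_univ, true_and] at hy
    obtain ⟨i, hi, rfl⟩ := hy
    exact ⟨hYmem i, hi⟩
  have h0K : (0 : Fin (q' + 1) → ℝ) ∉ convexHull ℝ (T' : Set (Fin (q' + 1) → ℝ)) := by
    intro h0
    rw [Finset.convexHull_eq] at h0
    obtain ⟨w, hw0, hw1, hwc⟩ := h0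
    rw [Finset.centerMass_eq_of_sum_1 _ _ hw1] at hwc
    simp only [id] at hwc
    have hz : ∀ y ∈ T', w y = 0 := by
      intro y0 hy0
      have h1 : w y0 • y0 ∈ C := hCsmul _ (hw0 y0 hy0) _ (hT' y0 hy0).1
      have h2' : ∑ y ∈ T'.erase y0, w y • y ∈ C :=
        Finset.sum_induction _ (· ∈ C) (fun a b ha hb => hCadd a ha b hb) hC0mem
          (fun y hy => hCsmul _ (hw0 y (Finset.mem_of_mem_erase hy)) _
            (hT' y (Finset.mem_of_mem_erase hy)).1)
      have hsum : w y0 • y0 + ∑ y ∈ T'.erase y0, w y • y = 0 := by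
        rw [Finset.add_sum_erase T' (fun y => w y • y) hy0]; exact hwc
      have h3 : -(w y0 • y0) = ∑ y ∈ T'.erase y0, w y • y :=
        neg_eq_of_add_eq_zero_right hsum
      have h4 := hCpointed _ h1 (h3 ▸ h2')
      rcases smul_eq_zero.mp h4 with h | h
      · exact h
      · exact absurd h (hT' y0 hy0).2
    rw [Finset.sum_eq_zero hz] at hw1
    exact zero_ne_one hw1
  obtain ⟨f, u, hu0, hu⟩ := geometric_hahn_banach_point_closed (convex_convexHull ℝ _)
    (T'.finite_toSet.isCompact_convexHull ℝ).isClosed h0K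
  rw [map_zero] at hu0
  set z : Fin (q' + 1) → ℝ := fun j => f fun l => if j = l then 1 else 0 with hzdef
  have hfz : ∀ v, f v = z ⬝ᵥ v := by
    intro v
    have h := LinearMap.pi_apply_eq_sum_univ (f : (Fin (q' + 1) → ℝ) →ₗ[ℝ] ℝ) v
    simp only [smul_eq_mul, ContinuousLinearMap.coe_coe] at h
    rw [h]
    show _ = ∑ i, z i * v i
    exact Finset.sum_congr rfl fun i _ => mul_comm _ _
  have hzY : ∀ i, Y i ≠ 0 → 0 < z ⬝ᵥ Y i := by
    intro i hi
    have hmem : Y i ∈ convexHull ℝ (T' : Set (Fin (q' + 1) → ℝ)) := by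
      apply subset_convexHull
      simp only [hT'def, Finset.coe_image, Set.mem_image, Finset.mem_coe, Finset.mem_filter,
        Finset.mem_univ, true_and]
      exact ⟨i, hi, rfl⟩
    have := hu _ hmem
    rw [hfz] at this
    linarith
  have hzY0 : ∀ (z' : Fin (q' + 1) → ℝ), (∀ i, Y i ≠ 0 → 0 < z' ⬝ᵥ Y i) →
      ∀ i, 0 ≤ z' ⬝ᵥ Y i := by
    intro z' hz' i
    by_cases hi : Y i = 0
    · simp [hi]
    · exact (hz' i hi).le
  have hposC : ∀ z' : Fin (q' + 1) → ℝ, (∀ i, 0 ≤ z' ⬝ᵥ Y i) → ∀ v ∈ C, 0 ≤ z' ⬝ᵥ v := by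
    intro z' hz' v hv
    rw [hYrep] at hv
    obtain ⟨μ, hμ, rfl⟩ := hv
    rw [dot_sum]
    exact Finset.sum_nonneg fun i _ => mul_nonneg (hμ i) (hz' i)
  have hzc : 0 < z ⬝ᵥ c := by
    have hcC := interior_subset hc
    rcases (hposC z (hzY0 z hzY) c hcC).lt_or_eq with h | h
    · exact h
    exfalso
    rw [hYrep] at hcC
    obtain ⟨μ, hμ, hcrep⟩ := hcC
    have hsum : ∑ i, μ i * (z ⬝ᵥ Y i) = 0 := by
      rw [← dot_sum, ← hcrep, ← h]
    have hterm := (Finset.sum_eq_zero_iff_of_nonneg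
      (fun i _ => mul_nonneg (hμ i) (hzY0 z hzY i))).mp hsum
    have hc0 : c = 0 := by
      rw [hcrep]
      apply Finset.sum_eq_zero
      intro i _
      by_cases hYi : Y i = 0
      · simp [hYi]
      · rcases mul_eq_zero.mp (hterm i (Finset.mem_univ i)) with h' | h'
        · simp [h']
        · exact absurd h' (ne_of_gt (hzY i hYi))
    rw [hc0] at hclast
    simp at hclast
  set z1 : Fin (q' + 1) → ℝ := (z ⬝ᵥ c)⁻¹ • z with hz1def
  have hz1c : z1 ⬝ᵥ c = 1 := by
    rw [hz1def, smul_dotProduct, smul_eq_mul, inv_mul_cancel₀ (ne_of_gt hzc)]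
  set U : Set (Fin (q' + 1) → ℝ) := {z' | ∀ i, Y i ≠ 0 → 0 < z' ⬝ᵥ Y i} with hUdef
  have hUopen : IsOpen U := by
    have hUe : U = ⋂ i, {z' : Fin (q' + 1) → ℝ | Y i ≠ 0 → 0 < z' ⬝ᵥ Y i} := by
      ext z'; simp [hUdef, Set.mem_iInter]
    rw [hUe]
    apply isOpen_iInter_of_finite
    intro i
    by_cases hi : Y i = 0
    · simp [hi]
    · simp only [hi, ne_eq, not_false_eq_true, true_implies]
      exact isOpen_lt continuous_const (dot_continuous (Y i))
  have hz1U : z1 ∈ U := by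
    intro i hi
    rw [hz1def, smul_dotProduct, smul_eq_mul]
    exact mul_pos (inv_pos.mpr hzc) (hzY i hi)
  have hUC : U ⊆ Cplus := by
    intro z' hz'
    rw [hCplus]
    exact hposC z' (hzY0 z' hz')
  have hInt : (Fin.init z1) ∈ interior Lam :=
    interior_maximal (fun lam h => by rw [hLam]; exact hUC h)
      (hUopen.preimage hcontw)
      (show wmap (Fin.init z1) ∈ U by rw [hsurj z1 hz1c]; exact hz1U)
  -- affine span of W is the hyperplane
  have hspan : affineSpan ℝ W = hplane c := by
    apply le_antisymm
    · apply affineSpan_le.mpr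
      intro w hw
      rw [hW] at hw
      exact hw.2
    · intro x hx
      have hx : x ⬝ᵥ c = 1 := hx
      set lam0 : Fin q' → ℝ := Fin.init z1 with hlam0def
      obtain ⟨ε, hε, hball⟩ := Metric.isOpen_iff.mp isOpen_interior lam0 hInt
      set d : Fin q' → ℝ := Fin.init x - lam0 with hddef
      have hdpos : (0 : ℝ) < ‖d‖ + 1 := by positivity
      set t : ℝ := ε / (2 * (‖d‖ + 1)) with htdef
      have htpos : 0 < t := by positivity
      have hmem : lam0 + t • d ∈ Lam := by
        apply interior_subset
        apply hball
        rw [Metric.mem_ball, dist_eq_norm, add_sub_cancel_left, norm_smul,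
          Real.norm_eq_abs, abs_of_pos htpos]
        calc t * ‖d‖ ≤ t * (‖d‖ + 1) := by nlinarith [norm_nonneg d]
          _ = ε / 2 := by rw [htdef, div_mul_eq_mul_div, mul_div_mul_right _ _ (ne_of_gt hdpos)]
          _ < ε := by linarith
      have h1 : wmap (lam0 + t • d) ∈ W := g1 _ hmem
      have h0 : wmap lam0 ∈ W := g1 _ (interior_subset hInt)
      have key := AffineSubspace.smul_vsub_vadd_mem (affineSpan ℝ W) t⁻¹
        (subset_affineSpan ℝ W h1) (subset_affineSpan ℝ W h0) (subset_affineSpan ℝ W h0)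
      have heq : t⁻¹ • (wmap (lam0 + t • d) - wmap lam0) + wmap lam0 = x := by
        rw [haff]
        have h5 : t⁻¹ • (lam0 + t • d - lam0) + lam0 = Fin.init x := by
          rw [add_sub_cancel_left, smul_smul, inv_mul_cancel₀ (ne_of_gt htpos), one_smul,
            hddef, sub_add_cancel]
        rw [h5, hsurj x hx]
      rw [vsub_eq_sub, vadd_eq_add, heq] at key
      exact key
  -- the homeomorphism between ℝ^{q'} and the hyperplane
  let e : (Fin q' → ℝ) ≃ₜ {x // x ∈ hplane c} :=
    { toFun := fun lam => ⟨wmap lam, hdot1 lam⟩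
      invFun := fun x => Fin.init x.1
      left_inv := hinit
      right_inv := fun x => Subtype.ext (hsurj x.1 x.2)
      continuous_toFun := hcontw.subtype_mk _
      continuous_invFun := continuous_pi fun i =>
        (continuous_apply (Fin.castSucc i)).comp continuous_subtype_val }
  have hLam_pre : Lam = e ⁻¹' (Subtype.val ⁻¹' W) := by
    ext lam
    simp only [Set.mem_preimage]
    constructor
    · intro h; exact g1 lam h
    · intro h
      rw [hLam]
      rw [hW] at h
      exact h.1
  have hIntLam : interior Lam = e ⁻¹' interior (Subtype.val ⁻¹' W) := by
    rw [hLam_pre, ← Homeomorph.preimage_interior]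
  have hII : intrinsicInterior ℝ W
      = Subtype.val '' interior ((Subtype.val : {x // x ∈ hplane c} → _) ⁻¹' W) :=
    intrinsic_eq _ _ hspan.symm
  refine ⟨g1, g2, fun lam _ => hinit lam, g4, ?_, ?_⟩
  · intro lam hl
    rw [hII]
    rw [hIntLam] at hl
    exact ⟨e lam, hl, rfl⟩
  · intro w hw
    rw [hII] at hw
    obtain ⟨x, hx, rfl⟩ := hw
    rw [hIntLam]
    have hex : e (Fin.init x.1) = x := Subtype.ext (hsurj x.1 x.2)
    show e (Fin.init x.1) ∈ interior (Subtype.val ⁻¹' W)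
    rw [hex]
    exact hx
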